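/- There exists a sufficiently small absolute constant c > 0 with the following property. Assume μ ≤ c/(κ‖X‖), ‖L_{X,⊥}ᵀP_{Z_tQ_t}‖ ≤ c/κ, ‖Z_t‖ ≤ 2√‖X‖, ‖Δ_t‖ ≤ (c/κ)·‖sym(X) − Z_tZ_tᵀ + Z̃_tZ̃_tᵀ‖, σ_min(Z_tQ_t) ≥ √(σ_min(X)/8), and ‖Z_tQ_{t,⊥}‖ ≤ c√(σ_min(X)). Then: (i) ‖L_{X,⊥}ᵀ(sym(X) − Z_tZ_tᵀ + Z̃_tZ̃_tᵀ)‖ ≤ 5‖L_Xᵀ(sym(X) − Z_tZ_tᵀ + Z̃_tZ̃_tᵀ)‖ + 4‖Z_tQ_{t,⊥}‖², and (ii) ‖sym(X) − Z_tZ_tᵀ + Z̃_tZ̃_tᵀ‖ ≤ 6‖L_Xᵀ(sym(X) − Z_tZ_tᵀ + Z̃_tZ̃_tᵀ)‖ + 4‖Z_tQ_{t,⊥}‖². -/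

import Mathlib

open Matrix MeasureTheory ProbabilityTheory

noncomputable section

namespace AsymMatrixSensing

/-- Euclidean norm of a real vector. -/
def euclNorm {ι : Type*} [Fintype ι] (v : ι → ℝ) : ℝ :=
  Real.sqrt (∑ i, v i ^ 2)

/-- Spectral norm of a real matrix. -/
def specNorm {ι₁ ι₂ : Type*} [Fintype ι₁] [Fintype ι₂] (M : Matrix ι₁ ι₂ ℝ) : ℝ :=
  sSup {c : ℝ | ∃ x : ι₂ → ℝ, euclNorm x ≤ 1 ∧ c = euclNorm (M.mulVec x)}

/-- Frobenius norm of a real matrix. -/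
def frobNorm {ι₁ ι₂ : Type*} [Fintype ι₁] [Fintype ι₂] (M : Matrix ι₁ ι₂ ℝ) : ℝ :=
  Real.sqrt (∑ i, ∑ j, M i j ^ 2)

/-- Nuclear norm of a real matrix (characterized by duality with the spectral norm). -/
def nucNorm {ι₁ ι₂ : Type*} [Fintype ι₁] [Fintype ι₂] (M : Matrix ι₁ ι₂ ℝ) : ℝ :=
  sSup {c : ℝ | ∃ B : Matrix ι₁ ι₂ ℝ, specNorm B ≤ 1 ∧ c = ∑ i, ∑ j, M i j * B i j}

/-- Smallest singular value `σ_{min(a,b)}(M)` of a matrix. -/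
def sigmaMin {ι₁ ι₂ : Type*} [Fintype ι₁] [Fintype ι₂] (M : Matrix ι₁ ι₂ ℝ) : ℝ :=
  max (sInf {c : ℝ | ∃ x : ι₂ → ℝ, euclNorm x = 1 ∧ c = euclNorm (M.mulVec x)})
      (sInf {c : ℝ | ∃ y : ι₁ → ℝ, euclNorm y = 1 ∧ c = euclNorm (Mᵀ.mulVec y)})

/-- Smallest nonzero singular value `σ_rank(M)`: the minimum of `‖Mx‖` over unit
vectors `x` orthogonal to the kernel of `M`. -/
def sigmaPos {ι₁ ι₂ : Type*} [Fintype ι₁] [Fintype ι₂] (M : Matrix ι₁ ι₂ ℝ) : ℝ :=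
  sInf {c : ℝ | ∃ x : ι₂ → ℝ, euclNorm x = 1 ∧
    (∀ y : ι₂ → ℝ, M.mulVec y = 0 → x ⬝ᵥ y = 0) ∧ c = euclNorm (M.mulVec x)}

/-- Condition number `κ = ‖M‖ / σ_min(M)`. -/
def condNum {ι₁ ι₂ : Type*} [Fintype ι₁] [Fintype ι₂] (M : Matrix ι₁ ι₂ ℝ) : ℝ :=
  specNorm M / sigmaPos M

/-- Trace inner product `⟨M, N⟩ = trace(Mᵀ N)`. -/
def minner {ι₁ ι₂ : Type*} [Fintype ι₁] [Fintype ι₂] (M N : Matrix ι₁ ι₂ ℝ) : ℝ :=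
  ∑ i, ∑ j, M i j * N i j

/-- `P` is a matrix with orthonormal columns spanning the column space of `M`. -/
def IsOrthCol {ι κ₁ κ₂ : Type*} [Fintype ι] [Fintype κ₁] [Fintype κ₂] [DecidableEq κ₂]
    (P : Matrix ι κ₂ ℝ) (M : Matrix ι κ₁ ℝ) : Prop :=
  Pᵀ * P = 1 ∧ (∃ C : Matrix κ₁ κ₂ ℝ, P = M * C) ∧ P * Pᵀ * M = M

/-- `L` has orthonormal columns spanning the subspace spanned by eigenvectors of the
symmetric matrix `F` corresponding to its `r` largest eigenvalues. -/
def IsTopEigenspace {ι : Type*} [Fintype ι] [DecidableEq ι] {r : ℕ} (F : Matrix ι ι ℝ)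
    (L : Matrix ι (Fin r) ℝ) : Prop :=
  Lᵀ * L = 1 ∧ ∃ d : Fin r → ℝ, F * L = L * Matrix.diagonal d ∧
    ∀ (v : ι → ℝ) (lam : ℝ), v ≠ 0 → F.mulVec v = lam • v →
      Lᵀ.mulVec v = 0 → ∀ i, lam ≤ d i

variable {n₁ n₂ m k r : ℕ}

/-- The measurement operator `𝒜`, given by `[𝒜(Z)]ᵢ = ⟨Aᵢ, Z⟩`. -/
def calA (A : Fin m → Matrix (Fin n₁) (Fin n₂) ℝ) (Z : Matrix (Fin n₁) (Fin n₂) ℝ) :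
    Fin m → ℝ := fun i => minner (A i) Z

/-- The restricted isometry property of order `s` with constant `δ`. -/
def HasRIP (A : Fin m → Matrix (Fin n₁) (Fin n₂) ℝ) (s : ℕ) (δ : ℝ) : Prop :=
  ∀ M : Matrix (Fin n₁) (Fin n₂) ℝ, M.rank ≤ s →
    (1 - δ) * frobNorm M ^ 2 ≤ ∑ i, calA A M i ^ 2 ∧
      ∑ i, calA A M i ^ 2 ≤ (1 + δ) * frobNorm M ^ 2

/-- `𝒜*𝒜`. -/
def AstarA (A : Fin m → Matrix (Fin n₁) (Fin n₂) ℝ) (Z : Matrix (Fin n₁) (Fin n₂) ℝ) :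
    Matrix (Fin n₁) (Fin n₂) ℝ := ∑ i, minner (A i) Z • A i

/-- The symmetrization `sym(X) = [[0, X], [Xᵀ, 0]]`. -/
def symMat (X : Matrix (Fin n₁) (Fin n₂) ℝ) :
    Matrix (Fin n₁ ⊕ Fin n₂) (Fin n₁ ⊕ Fin n₂) ℝ := Matrix.fromBlocks 0 X Xᵀ 0

/-- The symmetrized measurement matrices `Bᵢ = (1/√2)[[0, Aᵢ], [Aᵢᵀ, 0]]`. -/
def Bmat (A : Fin m → Matrix (Fin n₁) (Fin n₂) ℝ) (i : Fin m) :
    Matrix (Fin n₁ ⊕ Fin n₂) (Fin n₁ ⊕ Fin n₂) ℝ :=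
  (Real.sqrt 2)⁻¹ • Matrix.fromBlocks 0 (A i) (A i)ᵀ 0

/-- `ℬ*ℬ`. -/
def BstarB (A : Fin m → Matrix (Fin n₁) (Fin n₂) ℝ)
    (S : Matrix (Fin n₁ ⊕ Fin n₂) (Fin n₁ ⊕ Fin n₂) ℝ) :
    Matrix (Fin n₁ ⊕ Fin n₂) (Fin n₁ ⊕ Fin n₂) ℝ :=
  ∑ i, minner (Bmat A i) S • Bmat A i

/-- The factorized gradient descent iterates `(V_t, W_t)`. -/
def iter (A : Fin m → Matrix (Fin n₁) (Fin n₂) ℝ) (X : Matrix (Fin n₁) (Fin n₂) ℝ)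
    (μ : ℝ) (V₀ : Matrix (Fin n₁) (Fin k) ℝ) (W₀ : Matrix (Fin n₂) (Fin k) ℝ) :
    ℕ → Matrix (Fin n₁) (Fin k) ℝ × Matrix (Fin n₂) (Fin k) ℝ
  | 0 => (V₀, W₀)
  | t + 1 =>
    let p := iter A X μ V₀ W₀ t
    let G := AstarA A (p.1 * p.2ᵀ - X)
    (p.1 - μ • (G * p.2), p.2 - μ • (Gᵀ * p.1))

/-- The vertical stacking `(1/√2)[V; W]`. -/
def Zstack {κ : ℕ} (V : Matrix (Fin n₁) (Fin κ) ℝ) (W : Matrix (Fin n₂) (Fin κ) ℝ) :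
    Matrix (Fin n₁ ⊕ Fin n₂) (Fin κ) ℝ :=
  (Real.sqrt 2)⁻¹ • Matrix.fromRows V W

/-- `Z_t = (1/√2)[V_t; W_t]`. -/
def Zit (A : Fin m → Matrix (Fin n₁) (Fin n₂) ℝ) (X : Matrix (Fin n₁) (Fin n₂) ℝ)
    (μ : ℝ) (V₀ : Matrix (Fin n₁) (Fin k) ℝ) (W₀ : Matrix (Fin n₂) (Fin k) ℝ) (t : ℕ) :
    Matrix (Fin n₁ ⊕ Fin n₂) (Fin k) ℝ :=
  Zstack (iter A X μ V₀ W₀ t).1 (iter A X μ V₀ W₀ t).2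

/-- `Z̃_t = (1/√2)[V_t; −W_t]`. -/
def Ztil (A : Fin m → Matrix (Fin n₁) (Fin n₂) ℝ) (X : Matrix (Fin n₁) (Fin n₂) ℝ)
    (μ : ℝ) (V₀ : Matrix (Fin n₁) (Fin k) ℝ) (W₀ : Matrix (Fin n₂) (Fin k) ℝ) (t : ℕ) :
    Matrix (Fin n₁ ⊕ Fin n₂) (Fin k) ℝ :=
  Zstack (iter A X μ V₀ W₀ t).1 (-(iter A X μ V₀ W₀ t).2)

/-- `Δ_t = (Id − ℬ*ℬ)(Z_tZ_tᵀ − Z̃_tZ̃_tᵀ − sym(X))`. -/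
def Δit (A : Fin m → Matrix (Fin n₁) (Fin n₂) ℝ) (X : Matrix (Fin n₁) (Fin n₂) ℝ)
    (μ : ℝ) (V₀ : Matrix (Fin n₁) (Fin k) ℝ) (W₀ : Matrix (Fin n₂) (Fin k) ℝ) (t : ℕ) :
    Matrix (Fin n₁ ⊕ Fin n₂) (Fin n₁ ⊕ Fin n₂) ℝ :=
  let D := Zit A X μ V₀ W₀ t * (Zit A X μ V₀ W₀ t)ᵀ
    - Ztil A X μ V₀ W₀ t * (Ztil A X μ V₀ W₀ t)ᵀ - symMat X
  D - BstarB A D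

/-- The block diagonal matrix `diag(Id_{n₁}, −Id_{n₂})`. -/
def flipSign (n₁ n₂ : ℕ) : Matrix (Fin n₁ ⊕ Fin n₂) (Fin n₁ ⊕ Fin n₂) ℝ :=
  Matrix.fromBlocks 1 0 0 (-1)

/-- Product Gaussian measure modelling the random initialization pair `(V, W)`
with i.i.d. standard Gaussian entries. -/
def gaussPair (n₁ n₂ k : ℕ) :
    Measure ((Fin n₁ → Fin k → ℝ) × (Fin n₂ → Fin k → ℝ)) :=
  (Measure.pi fun _ : Fin n₁ => Measure.pi fun _ : Fin k => gaussianReal 0 1).prod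
    (Measure.pi fun _ : Fin n₂ => Measure.pi fun _ : Fin k => gaussianReal 0 1)

set_option linter.unusedSectionVars false
section Aux
open scoped Matrix.Norms.L2Operator

variable {ι₁ ι₂ ι₃ : Type*} [Fintype ι₁] [Fintype ι₂] [Fintype ι₃]
  [DecidableEq ι₁] [DecidableEq ι₂] [DecidableEq ι₃]

lemma euclNorm_eq_norm (v : ι₁ → ℝ) :
    euclNorm v = ‖(WithLp.equiv 2 (ι₁ → ℝ)).symm v‖ := by
  rw [EuclideanSpace.norm_eq]
  unfold euclNorm
  congr 1
  refine Finset.sum_congr rfl fun i _ => ?_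
  rw [WithLp.equiv_symm_apply, WithLp.ofLp_toLp, Real.norm_eq_abs, sq_abs]

lemma specNorm_eq_l2 (M : Matrix ι₁ ι₂ ℝ) : specNorm M = ‖M‖ := by
  rw [Matrix.l2_opNorm_def, ← ContinuousLinearMap.sSup_unitClosedBall_eq_norm]
  unfold specNorm
  congr 1
  ext c
  constructor
  · rintro ⟨x, hx, rfl⟩
    refine ⟨(WithLp.equiv 2 (ι₂ → ℝ)).symm x, ?_, ?_⟩
    · rw [Metric.mem_closedBall, dist_zero_right, ← euclNorm_eq_norm]; exact hx
    · simp only [LinearEquiv.trans_apply, LinearMap.coe_toContinuousLinearMap']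
      rw [euclNorm_eq_norm]; rfl
  · rintro ⟨x, hx, rfl⟩
    refine ⟨WithLp.equiv 2 (ι₂ → ℝ) x, ?_, ?_⟩
    · rw [Metric.mem_closedBall, dist_zero_right] at hx
      rw [euclNorm_eq_norm, Equiv.symm_apply_apply]
      exact hx
    · simp only [LinearEquiv.trans_apply, LinearMap.coe_toContinuousLinearMap']
      rw [euclNorm_eq_norm]
      congr 1

lemma euclNorm_nonneg (v : ι₁ → ℝ) : 0 ≤ euclNorm v := Real.sqrt_nonneg _

lemma euclNorm_add_le (u v : ι₁ → ℝ) : euclNorm (u + v) ≤ euclNorm u + euclNorm v := by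
  rw [euclNorm_eq_norm, euclNorm_eq_norm, euclNorm_eq_norm]
  exact norm_add_le ((WithLp.equiv 2 (ι₁ → ℝ)).symm u) ((WithLp.equiv 2 (ι₁ → ℝ)).symm v)

lemma conjT_eq_transpose (M : Matrix ι₁ ι₂ ℝ) : Mᴴ = Mᵀ := by
  ext i j; simp [Matrix.conjTranspose_apply]

lemma norm_transpose (M : Matrix ι₁ ι₂ ℝ) : ‖Mᵀ‖ = ‖M‖ := by
  rw [← conjT_eq_transpose]; exact Matrix.l2_opNorm_conjTranspose M

lemma norm_one_le_one : ‖(1 : Matrix ι₁ ι₁ ℝ)‖ ≤ 1 := by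
  have h := Matrix.l2_opNorm_conjTranspose_mul_self (1 : Matrix ι₁ ι₁ ℝ)
  rw [conjT_eq_transpose, Matrix.transpose_one, Matrix.one_mul] at h
  nlinarith [norm_nonneg (1 : Matrix ι₁ ι₁ ℝ)]

lemma norm_orth_le_one {M : Matrix ι₁ ι₂ ℝ} (h : Mᵀ * M = 1) : ‖M‖ ≤ 1 := by
  have h2 := Matrix.l2_opNorm_conjTranspose_mul_self M
  rw [conjT_eq_transpose, h] at h2
  nlinarith [norm_nonneg M, norm_one_le_one (ι₁ := ι₂)]

lemma euclNorm_mulVec_le (M : Matrix ι₁ ι₂ ℝ) (x : ι₂ → ℝ) :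
    euclNorm (M *ᵥ x) ≤ ‖M‖ * euclNorm x := by
  rw [euclNorm_eq_norm, euclNorm_eq_norm]
  exact Matrix.l2_opNorm_mulVec M ((WithLp.equiv 2 (ι₂ → ℝ)).symm x)

lemma norm_le_bound (M : Matrix ι₁ ι₂ ℝ) (C : ℝ) (hC : 0 ≤ C)
    (h : ∀ x : ι₂ → ℝ, euclNorm (M *ᵥ x) ≤ C * euclNorm x) : ‖M‖ ≤ C := by
  rw [Matrix.l2_opNorm_def]
  refine ContinuousLinearMap.opNorm_le_bound _ hC fun x => ?_
  have h1 := h (WithLp.equiv 2 (ι₂ → ℝ) x)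
  rw [euclNorm_eq_norm, euclNorm_eq_norm, Equiv.symm_apply_apply] at h1
  convert h1 using 2 <;> rfl

lemma norm_mul_transpose_lower (M : Matrix ι₁ ι₂ ℝ) (N : Matrix ι₃ ι₂ ℝ) (μ : ℝ)
    (hM : ∀ y : ι₂ → ℝ, μ * euclNorm y ≤ euclNorm (M *ᵥ y)) :
    μ * ‖N‖ ≤ ‖M * Nᵀ‖ := by
  rcases le_or_gt μ 0 with hμ | hμ
  · exact le_trans (mul_nonpos_of_nonpos_of_nonneg hμ (norm_nonneg N)) (norm_nonneg _)
  · have hNt : ‖Nᵀ‖ ≤ μ⁻¹ * ‖M * Nᵀ‖ := by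
      refine norm_le_bound _ _ (by positivity) fun x => ?_
      have h1 := hM (Nᵀ *ᵥ x)
      have h2 : euclNorm ((M * Nᵀ) *ᵥ x) ≤ ‖M * Nᵀ‖ * euclNorm x :=
        euclNorm_mulVec_le _ x
      rw [← Matrix.mulVec_mulVec] at h2
      rw [show μ⁻¹ * ‖M * Nᵀ‖ * euclNorm x = ‖M * Nᵀ‖ * euclNorm x * μ⁻¹ by ring,
        ← div_eq_mul_inv, le_div_iff₀ hμ]
      nlinarith
    rw [← norm_transpose N]
    calc μ * ‖Nᵀ‖ ≤ μ * (μ⁻¹ * ‖M * Nᵀ‖) := by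
          exact mul_le_mul_of_nonneg_left hNt (le_of_lt hμ)
      _ = ‖M * Nᵀ‖ := by field_simp


lemma split_mul {k r q m₁ m₂ : Type*} [Fintype k] [Fintype r] [Fintype q]
    [Fintype m₁] [Fintype m₂] [DecidableEq k]
    {Qt : Matrix k r ℝ} {Qtp : Matrix k q ℝ}
    (hC2 : Qt * Qtᵀ + Qtp * Qtpᵀ = 1)
    (A : Matrix m₁ k ℝ) (B : Matrix m₂ k ℝ) :
    A * Bᵀ = (A * Qt) * (B * Qt)ᵀ + (A * Qtp) * (B * Qtp)ᵀ := by
  have : (A * Qt) * (B * Qt)ᵀ + (A * Qtp) * (B * Qtp)ᵀ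
      = A * ((Qt * Qtᵀ + Qtp * Qtpᵀ) * Bᵀ) := by
    rw [Matrix.transpose_mul, Matrix.transpose_mul, Matrix.add_mul, Matrix.mul_add]
    simp only [Matrix.mul_assoc]
  rw [this, hC2, Matrix.one_mul]

lemma numerics {w eN sN dN DN εN lpE eE : ℝ}
    (hw : 0 < w) (heN0 : 0 ≤ eN) (hsN0 : 0 ≤ sN) (hdN0 : 0 ≤ dN) (hDN0 : 0 ≤ DN)
    (hεN50 : εN ≤ w / 50) (hsN100 : sN ≤ w / 100) (hdNεN : dN ≤ εN)
    (key : (w / 3 - εN) * dN ≤ eN + sN * sN + εN * dN + sN * sN)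
    (hDle : DN ≤ dN + sN)
    (hlpE : lpE ≤ 3 * eN + 2 * (DN * DN))
    (heE : eE ≤ eN + lpE) :
    lpE ≤ 5 * eN + 4 * sN ^ 2 ∧ eE ≤ 6 * eN + 4 * sN ^ 2 := by
  have hkey2 : w / 4 * dN ≤ eN + 2 * (sN * sN) := by
    nlinarith [mul_le_mul_of_nonneg_right hεN50 hdN0, mul_nonneg hw.le hdN0]
  have hdb : dN ≤ (eN + 2 * (sN * sN)) * 4 / w := by
    rw [le_div_iff₀ hw]
    nlinarith
  have hbnd0 : 0 ≤ (eN + 2 * (sN * sN)) * 4 / w := le_trans hdN0 hdb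
  have hd2 : dN * dN ≤ (eN + 2 * (sN * sN)) * (4 / 50) := by
    have h1 : dN * dN ≤ ((eN + 2 * (sN * sN)) * 4 / w) * (w / 50) :=
      mul_le_mul hdb (le_trans hdNεN hεN50) hdN0 hbnd0
    calc dN * dN ≤ ((eN + 2 * (sN * sN)) * 4 / w) * (w / 50) := h1
      _ = (eN + 2 * (sN * sN)) * (4 / 50) := by field_simp
  have hd3 : dN * sN ≤ (eN + 2 * (sN * sN)) * (4 / 100) := by
    have h1 : dN * sN ≤ ((eN + 2 * (sN * sN)) * 4 / w) * (w / 100) :=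
      mul_le_mul hdb hsN100 hsN0 hbnd0
    calc dN * sN ≤ ((eN + 2 * (sN * sN)) * 4 / w) * (w / 100) := h1
      _ = (eN + 2 * (sN * sN)) * (4 / 100) := by field_simp
  have hDD : DN * DN ≤ dN * dN + 2 * (dN * sN) + sN * sN := by
    nlinarith [mul_self_le_mul_self hDN0 hDle]
  constructor
  · nlinarith
  · nlinarith

set_option maxHeartbeats 1000000 in
lemma master {n r p k q : Type*} [Fintype n] [Fintype r] [Fintype p] [Fintype k] [Fintype q]
    [DecidableEq n] [DecidableEq r] [DecidableEq p] [DecidableEq k] [DecidableEq q]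
    (L : Matrix n r ℝ) (Lp : Matrix n p ℝ) (Z : Matrix n k ℝ) (P : Matrix n r ℝ)
    (S X' : Matrix n n ℝ) (Qt : Matrix k r ℝ) (Qtp : Matrix k q ℝ) (w : ℝ)
    (hS : S * S = 1) (hSt : Sᵀ = S)
    (hL : Lᵀ * L = 1) (hLSL : Lᵀ * (S * L) = 0)
    (hLp : Lpᵀ * Lp = 1) (hLLp : Lᵀ * Lp = 0)
    (hC1 : L * Lᵀ + Lp * Lpᵀ = 1)
    (hQt : Qtᵀ * Qt = 1) (hQtp : Qtpᵀ * Qtp = 1)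
    (hC2 : Qt * Qtᵀ + Qtp * Qtpᵀ = 1)
    (hP : Pᵀ * P = 1) (hPY : P * Pᵀ * (Z * Qt) = Z * Qt)
    (hXS : S * X' * S = -X') (hXsym : X'ᵀ = X')
    (hXPi : (1 - L * Lᵀ - (S * L) * (S * L)ᵀ) * X' = 0)
    (hw : 0 < w)
    (hεZ : ‖Lpᵀ * P‖ * ‖Z‖ ≤ w / 50)
    (hs : ‖Z * Qtp‖ ≤ w / 100)
    (hτ : ∀ y : r → ℝ, w / 3 * euclNorm y ≤ euclNorm ((Z * Qt) *ᵥ y)) :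
    ‖Lpᵀ * (X' - Z * Zᵀ + S * Z * (S * Z)ᵀ)‖
        ≤ 5 * ‖Lᵀ * (X' - Z * Zᵀ + S * Z * (S * Z)ᵀ)‖ + 4 * ‖Z * Qtp‖ ^ 2 ∧
      ‖X' - Z * Zᵀ + S * Z * (S * Z)ᵀ‖
        ≤ 6 * ‖Lᵀ * (X' - Z * Zᵀ + S * Z * (S * Z)ᵀ)‖ + 4 * ‖Z * Qtp‖ ^ 2 := by
  classical
  -- abbreviations
  obtain ⟨Lt, hLtdef⟩ : ∃ M : Matrix n r ℝ, M = S * L := ⟨_, rfl⟩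
  rw [← hLtdef] at hLSL hXPi
  have hLtT : Ltᵀ = Lᵀ * S := by rw [hLtdef, Matrix.transpose_mul, hSt]
  have hLtLt : Ltᵀ * Lt = 1 := by
    rw [hLtT, hLtdef, Matrix.mul_assoc, ← Matrix.mul_assoc S S L, hS, Matrix.one_mul, hL]
  have hLtL : Ltᵀ * L = 0 := by
    have h := congrArg Matrix.transpose hLSL
    rw [Matrix.transpose_mul, Matrix.transpose_transpose, Matrix.transpose_zero] at h
    exact h
  have hSLt : S * Lt = L := by
    rw [hLtdef, ← Matrix.mul_assoc, hS, Matrix.one_mul]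
  obtain ⟨Pi, hPidef⟩ : ∃ M : Matrix n n ℝ, M = 1 - L * Lᵀ - Lt * Ltᵀ := ⟨_, rfl⟩
  rw [← hPidef] at hXPi
  have hPiT : Piᵀ = Pi := by
    rw [hPidef]
    simp [Matrix.transpose_sub, Matrix.transpose_mul, Matrix.transpose_one,
      Matrix.transpose_transpose]
  have hPiL : Pi * L = 0 := by
    rw [hPidef, Matrix.sub_mul, Matrix.sub_mul, Matrix.one_mul, Matrix.mul_assoc, hL,
      Matrix.mul_one, Matrix.mul_assoc, hLtL, Matrix.mul_zero]
    simp
  have hPiLt : Pi * Lt = 0 := by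
    rw [hPidef, Matrix.sub_mul, Matrix.sub_mul, Matrix.one_mul, Matrix.mul_assoc, hLSL,
      Matrix.mul_zero, Matrix.mul_assoc, hLtLt, Matrix.mul_one]
    simp
  have hPiX : Pi * X' = 0 := hXPi
  have hXPiR : X' * Pi = 0 := by
    have h := congrArg Matrix.transpose hPiX
    rw [Matrix.transpose_mul, hPiT, hXsym, Matrix.transpose_zero] at h
    exact h
  have hPiS : Pi * S = S * Pi := by
    have h1 : Pi * S = S - L * Ltᵀ - Lt * Lᵀ := by
      rw [hPidef, Matrix.sub_mul, Matrix.sub_mul, Matrix.one_mul,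
        Matrix.mul_assoc L, Matrix.mul_assoc Lt]
      rw [← hLtT]
      rw [show Ltᵀ * S = Lᵀ by rw [hLtT, Matrix.mul_assoc, hS, Matrix.mul_one]]
    have h2 : S * Pi = S - Lt * Lᵀ - L * Ltᵀ := by
      rw [hPidef, Matrix.mul_sub, Matrix.mul_sub, Matrix.mul_one,
        ← Matrix.mul_assoc S L, ← hLtdef, ← Matrix.mul_assoc S Lt, hSLt]
    rw [h1, h2]
    abel
  have hPiPi : Pi * Pi = Pi := by
    nth_rewrite 2 [hPidef]
    rw [Matrix.mul_sub, Matrix.mul_sub, Matrix.mul_one, ← Matrix.mul_assoc, hPiL,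
      ← Matrix.mul_assoc, hPiLt, Matrix.zero_mul, Matrix.zero_mul]
    simp
  have hPiLp : Pi * (Lp * Lpᵀ) = Pi := by
    have h0 : Pi * (L * Lᵀ) + Pi * (Lp * Lpᵀ) = Pi := by
      rw [← Matrix.mul_add, hC1, Matrix.mul_one]
    rw [← Matrix.mul_assoc, hPiL, Matrix.zero_mul, zero_add] at h0
    exact h0
  have hLtLp : Ltᵀ * (Lp * Lpᵀ) = Ltᵀ := by
    have h0 : Ltᵀ * (L * Lᵀ) + Ltᵀ * (Lp * Lpᵀ) = Ltᵀ := by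
      rw [← Matrix.mul_add, hC1, Matrix.mul_one]
    rw [← Matrix.mul_assoc, hLtL, Matrix.zero_mul, zero_add] at h0
    exact h0
  -- norms of orthonormal pieces
  have nL : ‖L‖ ≤ 1 := norm_orth_le_one hL
  have nLt : ‖Lt‖ ≤ 1 := norm_orth_le_one hLtLt
  have nLp : ‖Lp‖ ≤ 1 := norm_orth_le_one hLp
  have nQt : ‖Qt‖ ≤ 1 := norm_orth_le_one hQt
  have nQtp : ‖Qtp‖ ≤ 1 := norm_orth_le_one hQtp
  have nP : ‖P‖ ≤ 1 := norm_orth_le_one hP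
  have nS : ‖S‖ ≤ 1 := norm_orth_le_one (by rw [hSt]; exact hS)
  have nLT : ‖Lᵀ‖ ≤ 1 := by rw [norm_transpose]; exact nL
  have nLtT : ‖Ltᵀ‖ ≤ 1 := by rw [norm_transpose]; exact nLt
  have nLpT : ‖Lpᵀ‖ ≤ 1 := by rw [norm_transpose]; exact nLp
  have nQtT : ‖Qtᵀ‖ ≤ 1 := by rw [norm_transpose]; exact nQt
  have nQtpT : ‖Qtpᵀ‖ ≤ 1 := by rw [norm_transpose]; exact nQtp
  have nPT : ‖Pᵀ‖ ≤ 1 := by rw [norm_transpose]; exact nP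
  have nPi : ‖Pi‖ ≤ 1 := by
    have h2 := Matrix.l2_opNorm_conjTranspose_mul_self Pi
    rw [conjT_eq_transpose, hPiT, hPiPi] at h2
    nlinarith [norm_nonneg Pi]
  -- E and its symmetries
  obtain ⟨E, hEdef⟩ : ∃ M : Matrix n n ℝ, M = X' - Z * Zᵀ + S * Z * (S * Z)ᵀ := ⟨_, rfl⟩
  rw [← hEdef]
  have hSZT : (S * Z)ᵀ = Zᵀ * S := by rw [Matrix.transpose_mul, hSt]
  have hEsym : Eᵀ = E := by
    rw [hEdef]
    simp [Matrix.transpose_add, Matrix.transpose_sub, Matrix.transpose_mul,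
      Matrix.transpose_transpose, hXsym, Matrix.mul_assoc]
  have hSES : S * E * S = -E := by
    have hZZS : S * (Z * Zᵀ) * S = S * Z * (S * Z)ᵀ := by
      rw [hSZT]
      simp only [Matrix.mul_assoc]
    have hSZZS : S * (S * Z * (S * Z)ᵀ) * S = Z * Zᵀ := by
      rw [hSZT]
      simp only [Matrix.mul_assoc]
      rw [hS, Matrix.mul_one, ← Matrix.mul_assoc, hS, Matrix.one_mul]
    rw [hEdef]
    simp only [Matrix.mul_sub, Matrix.mul_add, Matrix.sub_mul, Matrix.add_mul]
    rw [hXS, hZZS, hSZZS]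
    abel
  have hESneg : E * S = -(S * E) := by
    have h := congrArg (fun M => S * M) hSES
    change S * (S * E * S) = S * -E at h
    rw [← Matrix.mul_assoc, ← Matrix.mul_assoc, hS, Matrix.one_mul] at h
    rw [h, Matrix.mul_neg]
  have hLtE : Ltᵀ * E = -(Lᵀ * E * S) := by
    rw [hLtT, Matrix.mul_assoc, show S * E = -(E * S) by rw [hESneg, neg_neg],
      Matrix.mul_neg, ← Matrix.mul_assoc]
  have nLtE : ‖Ltᵀ * E‖ ≤ ‖Lᵀ * E‖ := by
    rw [hLtE, norm_neg]
    calc ‖Lᵀ * E * S‖ ≤ ‖Lᵀ * E‖ * ‖S‖ := Matrix.l2_opNorm_mul _ _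
      _ ≤ ‖Lᵀ * E‖ := mul_le_of_le_one_right (norm_nonneg _) nS
  -- D
  obtain ⟨D, hDdef⟩ : ∃ M : Matrix n k ℝ, M = Pi * Z := ⟨_, rfl⟩
  have hDT : Dᵀ = Zᵀ * Pi := by rw [hDdef, Matrix.transpose_mul, hPiT]
  have hPiZZPi : Pi * (Z * Zᵀ) * Pi = D * Dᵀ := by
    rw [hDT, hDdef]
    simp only [Matrix.mul_assoc]
  have hPiEPi : Pi * E * Pi = -(D * Dᵀ) + S * (D * Dᵀ) * S := by
    have hA : Pi * X' * Pi = 0 := by rw [hPiX, Matrix.zero_mul]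
    have hC : Pi * (S * Z * (S * Z)ᵀ) * Pi = S * (D * Dᵀ) * S := by
      rw [hSZT, hDT, hDdef]
      simp only [Matrix.mul_assoc]
      rw [← hPiS, ← Matrix.mul_assoc Pi S, hPiS, Matrix.mul_assoc]
    rw [hEdef]
    simp only [Matrix.mul_sub, Matrix.mul_add, Matrix.sub_mul, Matrix.add_mul]
    rw [hA, hPiZZPi, hC]
    abel
  have hLEPi : Lᵀ * E * Pi = -((Lᵀ * Z) * Dᵀ) + (Ltᵀ * Z) * (Dᵀ * S) := by
    have hA : Lᵀ * X' * Pi = 0 := by rw [Matrix.mul_assoc, hXPiR, Matrix.mul_zero]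
    have hB : Lᵀ * (Z * Zᵀ) * Pi = (Lᵀ * Z) * Dᵀ := by
      rw [hDT]
      simp only [Matrix.mul_assoc]
    have hC : Lᵀ * (S * Z * (S * Z)ᵀ) * Pi = (Ltᵀ * Z) * (Dᵀ * S) := by
      rw [hSZT, hLtT, hDT]
      simp only [Matrix.mul_assoc]
      rw [← hPiS]
    rw [hEdef]
    simp only [Matrix.mul_sub, Matrix.mul_add, Matrix.sub_mul, Matrix.add_mul]
    rw [hA, hB, hC]
    abel
  -- small quantities
  have nPZQt : ‖Pᵀ * (Z * Qt)‖ ≤ ‖Z‖ := by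
    calc ‖Pᵀ * (Z * Qt)‖ ≤ ‖Pᵀ‖ * ‖Z * Qt‖ := Matrix.l2_opNorm_mul _ _
      _ ≤ 1 * (‖Z‖ * ‖Qt‖) := by
          apply mul_le_mul nPT (Matrix.l2_opNorm_mul _ _) (norm_nonneg _) zero_le_one
      _ ≤ ‖Z‖ := by
          rw [one_mul]
          exact mul_le_of_le_one_right (norm_nonneg _) nQt
  have hdQt : ‖D * Qt‖ ≤ ‖Lpᵀ * P‖ * ‖Z‖ := by
    have hid : D * Qt = (Pi * Lp) * ((Lpᵀ * P) * (Pᵀ * (Z * Qt))) := by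
      rw [hDdef, Matrix.mul_assoc]
      conv_lhs => rw [← hPY, ← hPiLp]
      simp only [Matrix.mul_assoc]
    rw [hid]
    calc ‖Pi * Lp * ((Lpᵀ * P) * (Pᵀ * (Z * Qt)))‖
        ≤ ‖Pi * Lp‖ * ‖(Lpᵀ * P) * (Pᵀ * (Z * Qt))‖ := Matrix.l2_opNorm_mul _ _
      _ ≤ 1 * (‖Lpᵀ * P‖ * ‖Z‖) := by
          apply mul_le_mul
          · calc ‖Pi * Lp‖ ≤ ‖Pi‖ * ‖Lp‖ := Matrix.l2_opNorm_mul _ _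
              _ ≤ 1 := mul_le_one₀ nPi (norm_nonneg _) nLp
          · calc ‖(Lpᵀ * P) * (Pᵀ * (Z * Qt))‖ ≤ ‖Lpᵀ * P‖ * ‖Pᵀ * (Z * Qt)‖ :=
                Matrix.l2_opNorm_mul _ _
              _ ≤ ‖Lpᵀ * P‖ * ‖Z‖ :=
                mul_le_mul_of_nonneg_left nPZQt (norm_nonneg _)
          · exact norm_nonneg _
          · exact zero_le_one
      _ = ‖Lpᵀ * P‖ * ‖Z‖ := one_mul _
  have hbQt : ‖(Ltᵀ * Z) * Qt‖ ≤ ‖Lpᵀ * P‖ * ‖Z‖ := by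
    have hid : (Ltᵀ * Z) * Qt = ((Ltᵀ * Lp) * (Lpᵀ * P)) * (Pᵀ * (Z * Qt)) := by
      rw [Matrix.mul_assoc]
      conv_lhs => rw [← hPY, ← hLtLp]
      simp only [Matrix.mul_assoc]
    rw [hid]
    calc ‖Ltᵀ * Lp * (Lpᵀ * P) * (Pᵀ * (Z * Qt))‖
        ≤ ‖Ltᵀ * Lp * (Lpᵀ * P)‖ * ‖Pᵀ * (Z * Qt)‖ := Matrix.l2_opNorm_mul _ _
      _ ≤ (1 * ‖Lpᵀ * P‖) * ‖Z‖ := by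
          apply mul_le_mul ?_ nPZQt (norm_nonneg _) (by positivity)
          calc ‖Ltᵀ * Lp * (Lpᵀ * P)‖ ≤ ‖Ltᵀ * Lp‖ * ‖Lpᵀ * P‖ := Matrix.l2_opNorm_mul _ _
            _ ≤ 1 * ‖Lpᵀ * P‖ := by
                apply mul_le_mul_of_nonneg_right ?_ (norm_nonneg _)
                calc ‖Ltᵀ * Lp‖ ≤ ‖Ltᵀ‖ * ‖Lp‖ := Matrix.l2_opNorm_mul _ _
                  _ ≤ 1 := mul_le_one₀ nLtT (norm_nonneg _) nLp
      _ = ‖Lpᵀ * P‖ * ‖Z‖ := by rw [one_mul]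
  have hLpZQt : ‖Lpᵀ * (Z * Qt)‖ ≤ ‖Lpᵀ * P‖ * ‖Z‖ := by
    have hid : Lpᵀ * (Z * Qt) = (Lpᵀ * P) * (Pᵀ * (Z * Qt)) := by
      conv_lhs => rw [← hPY]
      simp only [Matrix.mul_assoc]
    rw [hid]
    calc ‖(Lpᵀ * P) * (Pᵀ * (Z * Qt))‖ ≤ ‖Lpᵀ * P‖ * ‖Pᵀ * (Z * Qt)‖ :=
        Matrix.l2_opNorm_mul _ _
      _ ≤ ‖Lpᵀ * P‖ * ‖Z‖ := mul_le_mul_of_nonneg_left nPZQt (norm_nonneg _)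
  -- s-bounded quantities
  have naQtp : ‖(Lᵀ * Z) * Qtp‖ ≤ ‖Z * Qtp‖ := by
    rw [Matrix.mul_assoc]
    calc ‖Lᵀ * (Z * Qtp)‖ ≤ ‖Lᵀ‖ * ‖Z * Qtp‖ := Matrix.l2_opNorm_mul _ _
      _ ≤ 1 * ‖Z * Qtp‖ := mul_le_mul_of_nonneg_right nLT (norm_nonneg _)
      _ = ‖Z * Qtp‖ := one_mul _
  have nbQtp : ‖(Ltᵀ * Z) * Qtp‖ ≤ ‖Z * Qtp‖ := by
    rw [Matrix.mul_assoc]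
    calc ‖Ltᵀ * (Z * Qtp)‖ ≤ ‖Ltᵀ‖ * ‖Z * Qtp‖ := Matrix.l2_opNorm_mul _ _
      _ ≤ 1 * ‖Z * Qtp‖ := mul_le_mul_of_nonneg_right nLtT (norm_nonneg _)
      _ = ‖Z * Qtp‖ := one_mul _
  have nDQtp : ‖D * Qtp‖ ≤ ‖Z * Qtp‖ := by
    rw [hDdef, Matrix.mul_assoc]
    calc ‖Pi * (Z * Qtp)‖ ≤ ‖Pi‖ * ‖Z * Qtp‖ := Matrix.l2_opNorm_mul _ _
      _ ≤ 1 * ‖Z * Qtp‖ := mul_le_mul_of_nonneg_right nPi (norm_nonneg _)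
      _ = ‖Z * Qtp‖ := one_mul _
  have nD : ‖D‖ ≤ ‖D * Qt‖ + ‖D * Qtp‖ := by
    have hid : D = (D * Qt) * Qtᵀ + (D * Qtp) * Qtpᵀ := by
      have h0 : D * (Qt * Qtᵀ + Qtp * Qtpᵀ) = D := by rw [hC2, Matrix.mul_one]
      rw [Matrix.mul_add, ← Matrix.mul_assoc, ← Matrix.mul_assoc] at h0
      exact h0.symm
    calc ‖D‖ = ‖(D * Qt) * Qtᵀ + (D * Qtp) * Qtpᵀ‖ := by rw [← hid]
      _ ≤ ‖(D * Qt) * Qtᵀ‖ + ‖(D * Qtp) * Qtpᵀ‖ := norm_add_le _ _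
      _ ≤ ‖D * Qt‖ + ‖D * Qtp‖ := by
          gcongr
          · calc ‖(D * Qt) * Qtᵀ‖ ≤ ‖D * Qt‖ * ‖Qtᵀ‖ := Matrix.l2_opNorm_mul _ _
              _ ≤ ‖D * Qt‖ := mul_le_of_le_one_right (norm_nonneg _) nQtT
          · calc ‖(D * Qtp) * Qtpᵀ‖ ≤ ‖D * Qtp‖ * ‖Qtpᵀ‖ := Matrix.l2_opNorm_mul _ _
              _ ≤ ‖D * Qtp‖ := mul_le_of_le_one_right (norm_nonneg _) nQtpT
  -- vector lower bound
  have hvec : ∀ y : r → ℝ, (w / 3 - ‖Lpᵀ * P‖ * ‖Z‖) * euclNorm y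
      ≤ euclNorm (((Lᵀ * Z) * Qt) *ᵥ y) := by
    intro y
    have hmm : L * (Lᵀ * (Z * Qt)) + Lp * (Lpᵀ * (Z * Qt)) = Z * Qt := by
      have h0 : (L * Lᵀ + Lp * Lpᵀ) * (Z * Qt) = Z * Qt := by rw [hC1, Matrix.one_mul]
      rw [Matrix.add_mul] at h0
      simp only [Matrix.mul_assoc] at h0
      exact h0
    have hdecomp : (Z * Qt) *ᵥ y
        = L *ᵥ ((Lᵀ * (Z * Qt)) *ᵥ y) + Lp *ᵥ ((Lpᵀ * (Z * Qt)) *ᵥ y) := by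
      rw [Matrix.mulVec_mulVec, Matrix.mulVec_mulVec, ← Matrix.add_mulVec, hmm]
    have htri : euclNorm ((Z * Qt) *ᵥ y) ≤ euclNorm (L *ᵥ ((Lᵀ * (Z * Qt)) *ᵥ y))
        + euclNorm (Lp *ᵥ ((Lpᵀ * (Z * Qt)) *ᵥ y)) := by
      rw [hdecomp]
      exact euclNorm_add_le _ _
    have h1 : euclNorm (L *ᵥ ((Lᵀ * (Z * Qt)) *ᵥ y)) ≤ euclNorm ((Lᵀ * (Z * Qt)) *ᵥ y) := by
      calc euclNorm (L *ᵥ ((Lᵀ * (Z * Qt)) *ᵥ y)) ≤ ‖L‖ * euclNorm ((Lᵀ * (Z * Qt)) *ᵥ y) :=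
          euclNorm_mulVec_le _ _
        _ ≤ 1 * euclNorm ((Lᵀ * (Z * Qt)) *ᵥ y) :=
          mul_le_mul_of_nonneg_right nL (euclNorm_nonneg _)
        _ = _ := one_mul _
    have h2 : euclNorm (Lp *ᵥ ((Lpᵀ * (Z * Qt)) *ᵥ y)) ≤ (‖Lpᵀ * P‖ * ‖Z‖) * euclNorm y := by
      calc euclNorm (Lp *ᵥ ((Lpᵀ * (Z * Qt)) *ᵥ y))
          ≤ ‖Lp‖ * euclNorm ((Lpᵀ * (Z * Qt)) *ᵥ y) := euclNorm_mulVec_le _ _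
        _ ≤ 1 * (‖Lpᵀ * (Z * Qt)‖ * euclNorm y) := by
            apply mul_le_mul nLp (euclNorm_mulVec_le _ _) (euclNorm_nonneg _) zero_le_one
        _ = ‖Lpᵀ * (Z * Qt)‖ * euclNorm y := one_mul _
        _ ≤ (‖Lpᵀ * P‖ * ‖Z‖) * euclNorm y :=
            mul_le_mul_of_nonneg_right hLpZQt (euclNorm_nonneg _)
    have h0 := hτ y
    have hexp : (w / 3 - ‖Lpᵀ * P‖ * ‖Z‖) * euclNorm y
        = w / 3 * euclNorm y - (‖Lpᵀ * P‖ * ‖Z‖) * euclNorm y := by ring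
    rw [hexp, Matrix.mul_assoc]
    linarith
  have hmain : (w / 3 - ‖Lpᵀ * P‖ * ‖Z‖) * ‖D * Qt‖ ≤ ‖((Lᵀ * Z) * Qt) * ((D * Qt)ᵀ)‖ :=
    norm_mul_transpose_lower _ _ _ hvec
  -- identity for (a Qt)(D Qt)ᵀ
  have hsplit_a : (Lᵀ * Z) * Dᵀ
      = ((Lᵀ * Z) * Qt) * ((D * Qt)ᵀ) + ((Lᵀ * Z) * Qtp) * ((D * Qtp)ᵀ) := split_mul hC2 _ _
  have hsplit_b : (Ltᵀ * Z) * Dᵀ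
      = ((Ltᵀ * Z) * Qt) * ((D * Qt)ᵀ) + ((Ltᵀ * Z) * Qtp) * ((D * Qtp)ᵀ) := split_mul hC2 _ _
  have hid2 : ((Lᵀ * Z) * Qt) * ((D * Qt)ᵀ)
      = -(Lᵀ * E * Pi) - ((Lᵀ * Z) * Qtp) * ((D * Qtp)ᵀ)
        + (((Ltᵀ * Z) * Qt) * ((D * Qt)ᵀ)) * S + (((Ltᵀ * Z) * Qtp) * ((D * Qtp)ᵀ)) * S := by
    have e1 : Lᵀ * E * Pi = -((Lᵀ * Z) * Dᵀ) + ((Ltᵀ * Z) * Dᵀ) * S := by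
      rw [hLEPi, Matrix.mul_assoc (Ltᵀ * Z) Dᵀ S]
    rw [hsplit_a, hsplit_b, Matrix.add_mul] at e1
    rw [e1]
    abel
  have hnorm2 : ‖((Lᵀ * Z) * Qt) * ((D * Qt)ᵀ)‖
      ≤ ‖Lᵀ * E‖ + ‖Z * Qtp‖ * ‖Z * Qtp‖ + (‖Lpᵀ * P‖ * ‖Z‖) * ‖D * Qt‖
        + ‖Z * Qtp‖ * ‖Z * Qtp‖ := by
    rw [hid2]
    have t1 : ‖-(Lᵀ * E * Pi)‖ ≤ ‖Lᵀ * E‖ := by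
      rw [norm_neg]
      calc ‖Lᵀ * E * Pi‖ ≤ ‖Lᵀ * E‖ * ‖Pi‖ := Matrix.l2_opNorm_mul _ _
        _ ≤ ‖Lᵀ * E‖ := mul_le_of_le_one_right (norm_nonneg _) nPi
    have t2 : ‖((Lᵀ * Z) * Qtp) * ((D * Qtp)ᵀ)‖ ≤ ‖Z * Qtp‖ * ‖Z * Qtp‖ := by
      calc ‖((Lᵀ * Z) * Qtp) * ((D * Qtp)ᵀ)‖ ≤ ‖(Lᵀ * Z) * Qtp‖ * ‖(D * Qtp)ᵀ‖ :=
          Matrix.l2_opNorm_mul _ _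
        _ ≤ ‖Z * Qtp‖ * ‖Z * Qtp‖ := by
            rw [norm_transpose]
            exact mul_le_mul naQtp nDQtp (norm_nonneg _) (norm_nonneg _)
    have t3 : ‖(((Ltᵀ * Z) * Qt) * ((D * Qt)ᵀ)) * S‖ ≤ (‖Lpᵀ * P‖ * ‖Z‖) * ‖D * Qt‖ := by
      calc ‖(((Ltᵀ * Z) * Qt) * ((D * Qt)ᵀ)) * S‖
          ≤ ‖((Ltᵀ * Z) * Qt) * ((D * Qt)ᵀ)‖ * ‖S‖ := Matrix.l2_opNorm_mul _ _
        _ ≤ ‖((Ltᵀ * Z) * Qt) * ((D * Qt)ᵀ)‖ := mul_le_of_le_one_right (norm_nonneg _) nS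
        _ ≤ ‖(Ltᵀ * Z) * Qt‖ * ‖(D * Qt)ᵀ‖ := Matrix.l2_opNorm_mul _ _
        _ ≤ (‖Lpᵀ * P‖ * ‖Z‖) * ‖D * Qt‖ := by
            rw [norm_transpose]
            exact mul_le_mul hbQt le_rfl (norm_nonneg _)
              (mul_nonneg (norm_nonneg _) (norm_nonneg _))
    have t4 : ‖(((Ltᵀ * Z) * Qtp) * ((D * Qtp)ᵀ)) * S‖ ≤ ‖Z * Qtp‖ * ‖Z * Qtp‖ := by
      calc ‖(((Ltᵀ * Z) * Qtp) * ((D * Qtp)ᵀ)) * S‖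
          ≤ ‖((Ltᵀ * Z) * Qtp) * ((D * Qtp)ᵀ)‖ * ‖S‖ := Matrix.l2_opNorm_mul _ _
        _ ≤ ‖((Ltᵀ * Z) * Qtp) * ((D * Qtp)ᵀ)‖ := mul_le_of_le_one_right (norm_nonneg _) nS
        _ ≤ ‖(Ltᵀ * Z) * Qtp‖ * ‖(D * Qtp)ᵀ‖ := Matrix.l2_opNorm_mul _ _
        _ ≤ ‖Z * Qtp‖ * ‖Z * Qtp‖ := by
            rw [norm_transpose]
            exact mul_le_mul nbQtp nDQtp (norm_nonneg _) (norm_nonneg _)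
    calc ‖-(Lᵀ * E * Pi) - ((Lᵀ * Z) * Qtp) * ((D * Qtp)ᵀ)
          + (((Ltᵀ * Z) * Qt) * ((D * Qt)ᵀ)) * S + (((Ltᵀ * Z) * Qtp) * ((D * Qtp)ᵀ)) * S‖
        ≤ ‖-(Lᵀ * E * Pi) - ((Lᵀ * Z) * Qtp) * ((D * Qtp)ᵀ)
          + (((Ltᵀ * Z) * Qt) * ((D * Qt)ᵀ)) * S‖ + ‖(((Ltᵀ * Z) * Qtp) * ((D * Qtp)ᵀ)) * S‖ :=
          norm_add_le _ _
      _ ≤ ‖-(Lᵀ * E * Pi) - ((Lᵀ * Z) * Qtp) * ((D * Qtp)ᵀ)‖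
          + ‖(((Ltᵀ * Z) * Qt) * ((D * Qt)ᵀ)) * S‖
          + ‖(((Ltᵀ * Z) * Qtp) * ((D * Qtp)ᵀ)) * S‖ := by
          gcongr
          exact norm_add_le _ _
      _ ≤ ‖-(Lᵀ * E * Pi)‖ + ‖((Lᵀ * Z) * Qtp) * ((D * Qtp)ᵀ)‖
          + ‖(((Ltᵀ * Z) * Qt) * ((D * Qt)ᵀ)) * S‖
          + ‖(((Ltᵀ * Z) * Qtp) * ((D * Qtp)ᵀ)) * S‖ := by
          gcongr
          exact norm_sub_le _ _
      _ ≤ ‖Lᵀ * E‖ + ‖Z * Qtp‖ * ‖Z * Qtp‖ + (‖Lpᵀ * P‖ * ‖Z‖) * ‖D * Qt‖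
          + ‖Z * Qtp‖ * ‖Z * Qtp‖ := by
          gcongr
  -- structural decompositions
  have hsum : L * Lᵀ + Lt * Ltᵀ + Pi = 1 := by rw [hPidef]; abel
  have hPiEL : Pi * E * L = (Lᵀ * E * Pi)ᵀ := by
    rw [Matrix.transpose_mul, Matrix.transpose_mul, hPiT, hEsym, Matrix.transpose_transpose,
      ← Matrix.mul_assoc]
  have hPiELt : Pi * E * Lt = (Ltᵀ * E * Pi)ᵀ := by
    rw [Matrix.transpose_mul, Matrix.transpose_mul, hPiT, hEsym, Matrix.transpose_transpose,
      ← Matrix.mul_assoc]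
  have nPiEL : ‖Pi * E * L‖ ≤ ‖Lᵀ * E‖ := by
    rw [hPiEL, norm_transpose]
    calc ‖Lᵀ * E * Pi‖ ≤ ‖Lᵀ * E‖ * ‖Pi‖ := Matrix.l2_opNorm_mul _ _
      _ ≤ ‖Lᵀ * E‖ := mul_le_of_le_one_right (norm_nonneg _) nPi
  have nPiELt : ‖Pi * E * Lt‖ ≤ ‖Lᵀ * E‖ := by
    rw [hPiELt, norm_transpose]
    calc ‖Ltᵀ * E * Pi‖ ≤ ‖Ltᵀ * E‖ * ‖Pi‖ := Matrix.l2_opNorm_mul _ _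
      _ ≤ ‖Ltᵀ * E‖ := mul_le_of_le_one_right (norm_nonneg _) nPi
      _ ≤ ‖Lᵀ * E‖ := nLtE
  have nPiEPi : ‖Pi * E * Pi‖ ≤ 2 * (‖D‖ * ‖D‖) := by
    rw [hPiEPi]
    have u1 : ‖D * Dᵀ‖ ≤ ‖D‖ * ‖D‖ := by
      calc ‖D * Dᵀ‖ ≤ ‖D‖ * ‖Dᵀ‖ := Matrix.l2_opNorm_mul _ _
        _ = ‖D‖ * ‖D‖ := by rw [norm_transpose]
    have u2 : ‖S * (D * Dᵀ) * S‖ ≤ ‖D‖ * ‖D‖ := by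
      calc ‖S * (D * Dᵀ) * S‖ ≤ ‖S * (D * Dᵀ)‖ * ‖S‖ := Matrix.l2_opNorm_mul _ _
        _ ≤ ‖S * (D * Dᵀ)‖ := mul_le_of_le_one_right (norm_nonneg _) nS
        _ ≤ ‖S‖ * ‖D * Dᵀ‖ := Matrix.l2_opNorm_mul _ _
        _ ≤ 1 * (‖D‖ * ‖D‖) := mul_le_mul nS u1 (norm_nonneg _) zero_le_one
        _ = ‖D‖ * ‖D‖ := one_mul _
    calc ‖-(D * Dᵀ) + S * (D * Dᵀ) * S‖ ≤ ‖-(D * Dᵀ)‖ + ‖S * (D * Dᵀ) * S‖ := norm_add_le _ _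
      _ ≤ ‖D‖ * ‖D‖ + ‖D‖ * ‖D‖ := by rw [norm_neg]; exact add_le_add u1 u2
      _ = 2 * (‖D‖ * ‖D‖) := by ring
  have nPiE : ‖Pi * E‖ ≤ 2 * ‖Lᵀ * E‖ + 2 * (‖D‖ * ‖D‖) := by
    have hdec : Pi * E = (Pi * E * L) * Lᵀ + (Pi * E * Lt) * Ltᵀ + Pi * E * Pi := by
      calc Pi * E = Pi * E * (L * Lᵀ + Lt * Ltᵀ + Pi) := by rw [hsum, Matrix.mul_one]
        _ = _ := by
            rw [Matrix.mul_add, Matrix.mul_add, ← Matrix.mul_assoc (Pi * E) L,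
              ← Matrix.mul_assoc (Pi * E) Lt]
    rw [hdec]
    have v1 : ‖(Pi * E * L) * Lᵀ‖ ≤ ‖Lᵀ * E‖ := by
      calc ‖(Pi * E * L) * Lᵀ‖ ≤ ‖Pi * E * L‖ * ‖Lᵀ‖ := Matrix.l2_opNorm_mul _ _
        _ ≤ ‖Pi * E * L‖ := mul_le_of_le_one_right (norm_nonneg _) nLT
        _ ≤ ‖Lᵀ * E‖ := nPiEL
    have v2 : ‖(Pi * E * Lt) * Ltᵀ‖ ≤ ‖Lᵀ * E‖ := by
      calc ‖(Pi * E * Lt) * Ltᵀ‖ ≤ ‖Pi * E * Lt‖ * ‖Ltᵀ‖ := Matrix.l2_opNorm_mul _ _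
        _ ≤ ‖Pi * E * Lt‖ := mul_le_of_le_one_right (norm_nonneg _) nLtT
        _ ≤ ‖Lᵀ * E‖ := nPiELt
    calc ‖(Pi * E * L) * Lᵀ + (Pi * E * Lt) * Ltᵀ + Pi * E * Pi‖
        ≤ ‖(Pi * E * L) * Lᵀ + (Pi * E * Lt) * Ltᵀ‖ + ‖Pi * E * Pi‖ := norm_add_le _ _
      _ ≤ ‖(Pi * E * L) * Lᵀ‖ + ‖(Pi * E * Lt) * Ltᵀ‖ + ‖Pi * E * Pi‖ := by
          gcongr
          exact norm_add_le _ _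
      _ ≤ ‖Lᵀ * E‖ + ‖Lᵀ * E‖ + 2 * (‖D‖ * ‖D‖) := by
          gcongr <;> first | exact v1 | exact v2 | exact nPiEPi
      _ = 2 * ‖Lᵀ * E‖ + 2 * (‖D‖ * ‖D‖) := by ring
  have hLpL : Lpᵀ * L = 0 := by
    have h := congrArg Matrix.transpose hLLp
    rw [Matrix.transpose_mul, Matrix.transpose_transpose, Matrix.transpose_zero] at h
    exact h
  have nLpE : ‖Lpᵀ * E‖ ≤ 3 * ‖Lᵀ * E‖ + 2 * (‖D‖ * ‖D‖) := by
    have hdec : Lpᵀ * E = (Lpᵀ * Lt) * (Ltᵀ * E) + Lpᵀ * (Pi * E) := by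
      calc Lpᵀ * E = Lpᵀ * ((L * Lᵀ + Lt * Ltᵀ + Pi) * E) := by rw [hsum, Matrix.one_mul]
        _ = (Lpᵀ * L) * (Lᵀ * E) + (Lpᵀ * Lt) * (Ltᵀ * E) + Lpᵀ * (Pi * E) := by
            rw [Matrix.add_mul, Matrix.add_mul, Matrix.mul_add, Matrix.mul_add]
            simp only [Matrix.mul_assoc]
        _ = (Lpᵀ * Lt) * (Ltᵀ * E) + Lpᵀ * (Pi * E) := by
            rw [hLpL, Matrix.zero_mul, zero_add]
    rw [hdec]
    have v1 : ‖(Lpᵀ * Lt) * (Ltᵀ * E)‖ ≤ ‖Lᵀ * E‖ := by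
      calc ‖(Lpᵀ * Lt) * (Ltᵀ * E)‖ ≤ ‖Lpᵀ * Lt‖ * ‖Ltᵀ * E‖ := Matrix.l2_opNorm_mul _ _
        _ ≤ 1 * ‖Lᵀ * E‖ := by
            apply mul_le_mul ?_ nLtE (norm_nonneg _) zero_le_one
            calc ‖Lpᵀ * Lt‖ ≤ ‖Lpᵀ‖ * ‖Lt‖ := Matrix.l2_opNorm_mul _ _
              _ ≤ 1 := mul_le_one₀ nLpT (norm_nonneg _) nLt
        _ = ‖Lᵀ * E‖ := one_mul _
    have v2 : ‖Lpᵀ * (Pi * E)‖ ≤ 2 * ‖Lᵀ * E‖ + 2 * (‖D‖ * ‖D‖) := by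
      calc ‖Lpᵀ * (Pi * E)‖ ≤ ‖Lpᵀ‖ * ‖Pi * E‖ := Matrix.l2_opNorm_mul _ _
        _ ≤ 1 * (2 * ‖Lᵀ * E‖ + 2 * (‖D‖ * ‖D‖)) := by
            apply mul_le_mul nLpT nPiE (norm_nonneg _) zero_le_one
        _ = _ := one_mul _
    calc ‖(Lpᵀ * Lt) * (Ltᵀ * E) + Lpᵀ * (Pi * E)‖
        ≤ ‖(Lpᵀ * Lt) * (Ltᵀ * E)‖ + ‖Lpᵀ * (Pi * E)‖ := norm_add_le _ _
      _ ≤ ‖Lᵀ * E‖ + (2 * ‖Lᵀ * E‖ + 2 * (‖D‖ * ‖D‖)) := add_le_add v1 v2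
      _ = 3 * ‖Lᵀ * E‖ + 2 * (‖D‖ * ‖D‖) := by ring
  have nE : ‖E‖ ≤ ‖Lᵀ * E‖ + ‖Lpᵀ * E‖ := by
    have hdec : E = L * (Lᵀ * E) + Lp * (Lpᵀ * E) := by
      calc E = (L * Lᵀ + Lp * Lpᵀ) * E := by rw [hC1, Matrix.one_mul]
        _ = _ := by rw [Matrix.add_mul]; simp only [Matrix.mul_assoc]
    conv_lhs => rw [hdec]
    calc ‖L * (Lᵀ * E) + Lp * (Lpᵀ * E)‖ ≤ ‖L * (Lᵀ * E)‖ + ‖Lp * (Lpᵀ * E)‖ := norm_add_le _ _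
      _ ≤ ‖Lᵀ * E‖ + ‖Lpᵀ * E‖ := by
          gcongr
          · calc ‖L * (Lᵀ * E)‖ ≤ ‖L‖ * ‖Lᵀ * E‖ := Matrix.l2_opNorm_mul _ _
              _ ≤ 1 * ‖Lᵀ * E‖ := mul_le_mul_of_nonneg_right nL (norm_nonneg _)
              _ = _ := one_mul _
          · calc ‖Lp * (Lpᵀ * E)‖ ≤ ‖Lp‖ * ‖Lpᵀ * E‖ := Matrix.l2_opNorm_mul _ _
              _ ≤ 1 * ‖Lpᵀ * E‖ := mul_le_mul_of_nonneg_right nLp (norm_nonneg _)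
              _ = _ := one_mul _
  -- numerics
  refine numerics (eN := ‖Lᵀ * E‖) (sN := ‖Z * Qtp‖) (dN := ‖D * Qt‖) (DN := ‖D‖)
    (εN := ‖Lpᵀ * P‖ * ‖Z‖) hw (norm_nonneg _) (norm_nonneg _) (norm_nonneg _)
    (norm_nonneg _) hεZ hs hdQt (le_trans hmain hnorm2)
    (le_trans nD (add_le_add le_rfl nDQtp)) nLpE nE

end Aux

section Aux2
open scoped Matrix.Norms.L2Operator
set_option linter.unusedSectionVars false

variable {ι₁ ι₂ : Type*} [Fintype ι₁] [Fintype ι₂] [DecidableEq ι₁] [DecidableEq ι₂]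

lemma euclNorm_smul (c : ℝ) (v : ι₁ → ℝ) : euclNorm (c • v) = |c| * euclNorm v := by
  rw [euclNorm_eq_norm, euclNorm_eq_norm]
  rw [show (WithLp.equiv 2 (ι₁ → ℝ)).symm (c • v) = c • (WithLp.equiv 2 (ι₁ → ℝ)).symm v from rfl]
  rw [norm_smul, Real.norm_eq_abs]

lemma euclNorm_pos {v : ι₁ → ℝ} (hv : v ≠ 0) : 0 < euclNorm v := by
  rw [euclNorm_eq_norm]
  rw [norm_pos_iff]
  intro h
  exact hv (congrArg (WithLp.equiv 2 (ι₁ → ℝ)) h)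

lemma specNorm_nonneg (M : Matrix ι₁ ι₂ ℝ) : 0 ≤ specNorm M := by
  rw [specNorm_eq_l2]; exact norm_nonneg _

lemma specNorm_zero : specNorm (0 : Matrix ι₁ ι₂ ℝ) = 0 := by
  rw [specNorm_eq_l2]; exact norm_zero

lemma sigmaPos_nonneg (M : Matrix ι₁ ι₂ ℝ) : 0 ≤ sigmaPos M := by
  apply Real.sInf_nonneg
  rintro x ⟨y, hy, -, rfl⟩
  exact euclNorm_nonneg _

lemma sigmaPos_le_specNorm (M : Matrix ι₁ ι₂ ℝ) : sigmaPos M ≤ specNorm M := by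
  unfold sigmaPos
  rcases Set.eq_empty_or_nonempty {c : ℝ | ∃ x : ι₂ → ℝ, euclNorm x = 1 ∧
      (∀ y : ι₂ → ℝ, M.mulVec y = 0 → x ⬝ᵥ y = 0) ∧ c = euclNorm (M.mulVec x)} with he | hne
  · rw [he, Real.sInf_empty]; exact specNorm_nonneg M
  · obtain ⟨c0, hc0⟩ := hne
    have h1 : sInf _ ≤ c0 := csInf_le ⟨0, by rintro x ⟨y, hy, -, rfl⟩; exact euclNorm_nonneg _⟩ hc0
    refine le_trans h1 ?_
    obtain ⟨x, hx1, -, rfl⟩ := hc0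
    calc euclNorm (M.mulVec x) ≤ ‖M‖ * euclNorm x := euclNorm_mulVec_le M x
      _ = ‖M‖ := by rw [hx1, mul_one]
      _ = specNorm M := (specNorm_eq_l2 M).symm

lemma rank_card_le {M : Matrix ι₁ ι₂ ℝ} (h : Mᵀ * M = 1) :
    Fintype.card ι₂ ≤ Fintype.card ι₁ := by
  have hinj : Function.Injective M.mulVecLin := by
    intro x y hxy
    have h2 : Mᵀ.mulVec (M.mulVec x) = Mᵀ.mulVec (M.mulVec y) := by
      simp only [Matrix.mulVecLin_apply] at hxy
      rw [hxy]
    rw [Matrix.mulVec_mulVec, Matrix.mulVec_mulVec, h, Matrix.one_mulVec,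
      Matrix.one_mulVec] at h2
    exact h2
  calc Fintype.card ι₂ = Module.finrank ℝ (ι₂ → ℝ) := Module.finrank_pi ℝ |>.symm
    _ ≤ Module.finrank ℝ (ι₁ → ℝ) := LinearMap.finrank_le_finrank_of_injective hinj
    _ = Fintype.card ι₁ := Module.finrank_pi ℝ

lemma complete_of_orth {n' r' p' : Type*} [Fintype n'] [Fintype r'] [Fintype p']
    [DecidableEq n'] [DecidableEq r'] [DecidableEq p']
    (L : Matrix n' r' ℝ) (Lp : Matrix n' p' ℝ)
    (hL : Lᵀ * L = 1) (hLp : Lpᵀ * Lp = 1) (hLLp : Lᵀ * Lp = 0)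
    (hcard : Fintype.card r' + Fintype.card p' = Fintype.card n') :
    L * Lᵀ + Lp * Lpᵀ = 1 := by
  have hLpL : Lpᵀ * L = 0 := by
    have h := congrArg Matrix.transpose hLLp
    rw [Matrix.transpose_mul, Matrix.transpose_transpose, Matrix.transpose_zero] at h
    exact h
  have hUtU : (Matrix.fromCols L Lp)ᵀ * Matrix.fromCols L Lp = 1 := by
    rw [Matrix.transpose_fromCols, Matrix.fromRows_mul_fromCols, hL, hLp, hLLp, hLpL]
    exact Matrix.fromBlocks_one
  have e : n' ≃ (r' ⊕ p') := Fintype.equivOfCardEq (by simp [Fintype.card_sum, hcard])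
  have hUUt : Matrix.fromCols L Lp * (Matrix.fromCols L Lp)ᵀ = 1 :=
    (Matrix.mul_eq_one_comm_of_equiv e).mpr hUtU
  rw [Matrix.transpose_fromCols, Matrix.fromCols_mul_fromRows] at hUUt
  exact hUUt

lemma sigmaMin_lower (M : Matrix ι₁ ι₂ ℝ) {τ : ℝ} (hτpos : 0 < τ)
    (h : τ ≤ sigmaMin M) :
    (∀ y : ι₂ → ℝ, τ * euclNorm y ≤ euclNorm (M *ᵥ y)) ∨
      Fintype.card ι₁ ≤ Fintype.card ι₂ := by
  unfold sigmaMin at h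
  rcases le_max_iff.mp h with h1 | h2
  · left
    intro y
    by_cases hy : y = 0
    · subst hy
      rw [Matrix.mulVec_zero]
      rw [show euclNorm (0 : ι₂ → ℝ) = 0 by
        rw [euclNorm_eq_norm]; exact norm_zero, mul_zero]
      exact euclNorm_nonneg _
    · have hny : 0 < euclNorm y := euclNorm_pos hy
      have hu1 : euclNorm ((euclNorm y)⁻¹ • y) = 1 := by
        rw [euclNorm_smul, abs_of_pos (by positivity), inv_mul_cancel₀ (ne_of_gt hny)]
      have hmem : euclNorm (M *ᵥ ((euclNorm y)⁻¹ • y)) ∈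
          {c : ℝ | ∃ x : ι₂ → ℝ, euclNorm x = 1 ∧ c = euclNorm (M.mulVec x)} :=
        ⟨_, hu1, rfl⟩
      have hge : τ ≤ euclNorm (M *ᵥ ((euclNorm y)⁻¹ • y)) :=
        le_trans h1 (csInf_le ⟨0, by rintro x ⟨z, hz, rfl⟩; exact euclNorm_nonneg _⟩ hmem)
      rw [Matrix.mulVec_smul, euclNorm_smul, abs_of_pos (by positivity)] at hge
      have h3 := mul_le_mul_of_nonneg_left hge hny.le
      have h4 : euclNorm y * ((euclNorm y)⁻¹ * euclNorm (M *ᵥ y)) = euclNorm (M *ᵥ y) := by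
        field_simp
      rw [h4] at h3
      rw [mul_comm]
      exact h3
  · right
    have hinj : Function.Injective Mᵀ.mulVecLin := by
      intro x y hxy
      by_contra hne
      have hv : x - y ≠ 0 := sub_ne_zero.mpr hne
      have hMv : Mᵀ *ᵥ (x - y) = 0 := by
        rw [Matrix.mulVec_sub]
        simp only [Matrix.mulVecLin_apply] at hxy
        rw [hxy, sub_self]
      have hnv : 0 < euclNorm (x - y) := euclNorm_pos hv
      have hu1 : euclNorm ((euclNorm (x - y))⁻¹ • (x - y)) = 1 := by
        rw [euclNorm_smul, abs_of_pos (by positivity), inv_mul_cancel₀ (ne_of_gt hnv)]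
      have hmem : euclNorm (Mᵀ *ᵥ ((euclNorm (x - y))⁻¹ • (x - y))) ∈
          {c : ℝ | ∃ z : ι₁ → ℝ, euclNorm z = 1 ∧ c = euclNorm (Mᵀ.mulVec z)} :=
        ⟨_, hu1, rfl⟩
      have hge : τ ≤ euclNorm (Mᵀ *ᵥ ((euclNorm (x - y))⁻¹ • (x - y))) :=
        le_trans h2 (csInf_le ⟨0, by rintro c ⟨z, hz, rfl⟩; exact euclNorm_nonneg _⟩ hmem)
      rw [Matrix.mulVec_smul, hMv, smul_zero] at hge
      rw [show euclNorm (0 : ι₂ → ℝ) = 0 by rw [euclNorm_eq_norm]; exact norm_zero] at hge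
      linarith
  -- wrong orientation fixed below
    calc Fintype.card ι₁ = Module.finrank ℝ (ι₁ → ℝ) := (Module.finrank_pi ℝ).symm
      _ ≤ Module.finrank ℝ (ι₂ → ℝ) := LinearMap.finrank_le_finrank_of_injective hinj
      _ = Fintype.card ι₂ := Module.finrank_pi ℝ

end Aux2


section Aux3
open scoped Matrix.Norms.L2Operator
set_option linter.unusedSectionVars false

variable {n₁ n₂ : ℕ}

lemma flip_mul_stack {κ : ℕ} (V : Matrix (Fin n₁) (Fin κ) ℝ) (W : Matrix (Fin n₂) (Fin κ) ℝ) :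
    flipSign n₁ n₂ * Zstack V W = Zstack V (-W) := by
  unfold flipSign Zstack
  rw [Matrix.mul_smul, Matrix.fromBlocks_mul_fromRows]
  simp [Matrix.one_mul, Matrix.zero_mul, Matrix.neg_mul]

lemma flipSign_mul_self : flipSign n₁ n₂ * flipSign n₁ n₂ = 1 := by
  unfold flipSign
  rw [Matrix.fromBlocks_multiply]
  simp [← Matrix.fromBlocks_one]

lemma flipSign_transpose : (flipSign n₁ n₂)ᵀ = flipSign n₁ n₂ := by
  unfold flipSign
  rw [Matrix.fromBlocks_transpose]
  simp

lemma stack_mul_stackT {r' : ℕ} (V V' : Matrix (Fin n₁) (Fin r') ℝ)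
    (W W' : Matrix (Fin n₂) (Fin r') ℝ) :
    Zstack V W * (Zstack V' W')ᵀ
      = (2⁻¹ : ℝ) • Matrix.fromBlocks (V * V'ᵀ) (V * W'ᵀ) (W * V'ᵀ) (W * W'ᵀ) := by
  unfold Zstack
  rw [Matrix.transpose_smul, Matrix.transpose_fromRows, Matrix.smul_mul, Matrix.mul_smul,
    smul_smul, Matrix.fromRows_mul_fromCols]
  congr 1
  rw [← mul_inv, Real.mul_self_sqrt (by norm_num : (0:ℝ) ≤ 2)]

lemma stackT_mul_stack {r' κ : ℕ} (V : Matrix (Fin n₁) (Fin r') ℝ)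
    (W : Matrix (Fin n₂) (Fin r') ℝ) (V' : Matrix (Fin n₁) (Fin κ) ℝ)
    (W' : Matrix (Fin n₂) (Fin κ) ℝ) :
    (Zstack V W)ᵀ * Zstack V' W' = (2⁻¹ : ℝ) • (Vᵀ * V' + Wᵀ * W') := by
  unfold Zstack
  rw [Matrix.transpose_smul, Matrix.transpose_fromRows, Matrix.smul_mul, Matrix.mul_smul,
    smul_smul, Matrix.fromCols_mul_fromRows]
  congr 1
  rw [← mul_inv, Real.mul_self_sqrt (by norm_num : (0:ℝ) ≤ 2)]

lemma half_smul_add_self {α β : Type*} [Fintype α] [Fintype β] (M : Matrix α β ℝ) :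
    (2⁻¹ : ℝ) • (M + M) = M := by
  rw [← two_smul ℝ M, smul_smul]
  norm_num

lemma proj_stack {r' : ℕ} (P : Matrix (Fin n₁) (Fin r') ℝ) (Q : Matrix (Fin n₂) (Fin r') ℝ) :
    Zstack P Q * (Zstack P Q)ᵀ + Zstack P (-Q) * (Zstack P (-Q))ᵀ
      = Matrix.fromBlocks (P * Pᵀ) 0 0 (Q * Qᵀ) := by
  rw [stack_mul_stackT, stack_mul_stackT, ← smul_add]
  simp only [Matrix.transpose_neg, Matrix.mul_neg, Matrix.neg_mul, neg_neg]
  rw [Matrix.fromBlocks_add]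
  rw [show P * Qᵀ + -(P * Qᵀ) = 0 by abel, show Q * Pᵀ + -(Q * Pᵀ) = 0 by abel]
  have h1 : (2⁻¹ : ℝ) • Matrix.fromBlocks (P * Pᵀ + P * Pᵀ) (0 : Matrix (Fin n₁) (Fin n₂) ℝ)
      (0 : Matrix (Fin n₂) (Fin n₁) ℝ) (Q * Qᵀ + Q * Qᵀ)
      = Matrix.fromBlocks ((2⁻¹ : ℝ) • (P * Pᵀ + P * Pᵀ)) ((2⁻¹ : ℝ) • (0:Matrix (Fin n₁) (Fin n₂) ℝ))
        ((2⁻¹ : ℝ) • (0:Matrix (Fin n₂) (Fin n₁) ℝ)) ((2⁻¹ : ℝ) • (Q * Qᵀ + Q * Qᵀ)) := by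
    rw [Matrix.fromBlocks_smul]
  rw [h1, half_smul_add_self, half_smul_add_self, smul_zero, smul_zero]

lemma proj_symMat {r' : ℕ} (P : Matrix (Fin n₁) (Fin r') ℝ) (Q : Matrix (Fin n₂) (Fin r') ℝ)
    (D : Matrix (Fin r') (Fin r') ℝ) (hP : Pᵀ * P = 1) (hQ : Qᵀ * Q = 1) :
    Matrix.fromBlocks (P * Pᵀ) 0 0 (Q * Qᵀ) * symMat (P * D * Qᵀ) = symMat (P * D * Qᵀ) := by
  unfold symMat
  rw [Matrix.fromBlocks_multiply]
  have h1 : P * Pᵀ * (P * D * Qᵀ) = P * D * Qᵀ := by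
    rw [show P * Pᵀ * (P * D * Qᵀ) = P * ((Pᵀ * P) * (D * Qᵀ)) by simp only [Matrix.mul_assoc],
      hP, Matrix.one_mul, Matrix.mul_assoc]
  have h2 : Q * Qᵀ * (P * D * Qᵀ)ᵀ = (P * D * Qᵀ)ᵀ := by
    rw [Matrix.transpose_mul, Matrix.transpose_mul, Matrix.transpose_transpose]
    rw [show Q * Qᵀ * (Q * (Dᵀ * Pᵀ)) = Q * ((Qᵀ * Q) * (Dᵀ * Pᵀ)) by
      simp only [Matrix.mul_assoc], hQ, Matrix.one_mul]
  simp only [Matrix.mul_zero, Matrix.zero_mul, add_zero, zero_add, h1, h2]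

lemma symMat_transpose (X : Matrix (Fin n₁) (Fin n₂) ℝ) : (symMat X)ᵀ = symMat X := by
  unfold symMat
  rw [Matrix.fromBlocks_transpose]
  simp

lemma flip_symMat_flip (X : Matrix (Fin n₁) (Fin n₂) ℝ) :
    flipSign n₁ n₂ * symMat X * flipSign n₁ n₂ = -(symMat X) := by
  unfold flipSign symMat
  rw [Matrix.fromBlocks_multiply, Matrix.fromBlocks_multiply]
  simp [Matrix.fromBlocks_neg]

end Aux3

section Main
open scoped Matrix.Norms.L2Operator
set_option maxHeartbeats 1000000 in
/-- bounding the full residual by its projection onto the signal space. -/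
theorem statement16_residual_bound :
    ∃ c : ℝ, 0 < c ∧
    ∀
    (n₁ n₂ m k r : ℕ)
    (A : Fin m → Matrix (Fin n₁) (Fin n₂) ℝ) (X : Matrix (Fin n₁) (Fin n₂) ℝ)
    (PX : Matrix (Fin n₁) (Fin r) ℝ) (QX : Matrix (Fin n₂) (Fin r) ℝ) (σX : Fin r → ℝ)
    (hPX : PXᵀ * PX = 1) (hQX : QXᵀ * QX = 1)
    (hσpos : ∀ i, 0 < σX i) (hσanti : Antitone σX)
    (hXsvd : X = PX * Matrix.diagonal σX * QXᵀ)
    (μ : ℝ) (hμ : 0 < μ)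
    (V₀ : Matrix (Fin n₁) (Fin k) ℝ) (W₀ : Matrix (Fin n₂) (Fin k) ℝ)
    (Z Z' : ℕ → Matrix (Fin n₁ ⊕ Fin n₂) (Fin k) ℝ)
    (hZ : Z = Zit A X μ V₀ W₀) (hZ' : Z' = Ztil A X μ V₀ W₀)
    (LX : Matrix (Fin n₁ ⊕ Fin n₂) (Fin r) ℝ) (hLX : LX = Zstack PX QX)
    (κ σm : ℝ) (hκ : κ = condNum X) (hσm : σm = sigmaPos X)
    (Δ : ℕ → Matrix (Fin n₁ ⊕ Fin n₂) (Fin n₁ ⊕ Fin n₂) ℝ) (hΔ : Δ = Δit A X μ V₀ W₀)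
    (LXp : Matrix (Fin n₁ ⊕ Fin n₂) (Fin (n₁ + n₂ - r)) ℝ)
    (hLXp1 : LXpᵀ * LXp = 1) (hLXp2 : LXᵀ * LXp = 0)
    (t : ℕ)
    (Qt : Matrix (Fin k) (Fin r) ℝ) (hQt1 : Qtᵀ * Qt = 1)
    (hQt2 : LXᵀ * Z t * Qt * Qtᵀ = LXᵀ * Z t)
    (Qtp : Matrix (Fin k) (Fin (k - r)) ℝ) (hQtp1 : Qtpᵀ * Qtp = 1) (hQtp2 : Qtᵀ * Qtp = 0)
    (PZ : Matrix (Fin n₁ ⊕ Fin n₂) (Fin r) ℝ) (hPZ : IsOrthCol PZ (Z t * Qt))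
    (h1 : μ ≤ c / (κ * specNorm X))
    (h2 : specNorm (LXpᵀ * PZ) ≤ c / κ)
    (h3 : specNorm (Z t) ≤ 2 * Real.sqrt (specNorm X))
    (h4 : specNorm (Δ t) ≤ c / κ * specNorm (symMat X - Z t * (Z t)ᵀ + Z' t * (Z' t)ᵀ))
    (h5 : Real.sqrt (σm / 8) ≤ sigmaMin (Z t * Qt))
    (h6 : specNorm (Z t * Qtp) ≤ c * Real.sqrt σm),
    specNorm (LXpᵀ * (symMat X - Z t * (Z t)ᵀ + Z' t * (Z' t)ᵀ))
      ≤ 5 * specNorm (LXᵀ * (symMat X - Z t * (Z t)ᵀ + Z' t * (Z' t)ᵀ))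
        + 4 * specNorm (Z t * Qtp) ^ 2 ∧
    specNorm (symMat X - Z t * (Z t)ᵀ + Z' t * (Z' t)ᵀ)
      ≤ 6 * specNorm (LXᵀ * (symMat X - Z t * (Z t)ᵀ + Z' t * (Z' t)ᵀ))
        + 4 * specNorm (Z t * Qtp) ^ 2 := by
  refine ⟨1/100, by norm_num, ?_⟩
  intro n₁ n₂ m k r A X PX QX σX hPX hQX hσpos hσanti hXsvd μ hμ V₀ W₀ Z Z' hZ hZ' LX hLX
    κ σm hκ hσm Δ hΔ LXp hLXp1 hLXp2 t Qt hQt1 hQt2 Qtp hQtp1 hQtp2 PZ hPZ h1 h2 h3 h4 h5 h6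
  classical
  have hspec0 : 0 ≤ specNorm X := specNorm_nonneg X
  have hsig0 : 0 ≤ sigmaPos X := sigmaPos_nonneg X
  have hκcond : κ = specNorm X / sigmaPos X := by rw [hκ]; rfl
  have hκ0 : 0 ≤ κ := by rw [hκcond]; exact div_nonneg hspec0 hsig0
  have hκX : 0 < κ * specNorm X := by
    by_contra hc
    push_neg at hc
    have h0 : (1:ℝ)/100 / (κ * specNorm X) ≤ 0 := by
      rcases lt_or_eq_of_le hc with hlt | heq
      · exact le_of_lt (div_neg_of_pos_of_neg (by norm_num) hlt)
      · rw [heq, div_zero]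
    linarith [h1, hμ]
  have hκpos : 0 < κ := by
    rcases mul_pos_iff.mp hκX with ⟨ha, _⟩ | ⟨ha, _⟩
    · exact ha
    · linarith
  have hXpos : 0 < specNorm X := by
    rcases mul_pos_iff.mp hκX with ⟨_, hb⟩ | ⟨_, hb⟩
    · exact hb
    · linarith
  have hσm0 : 0 ≤ σm := by rw [hσm]; exact hsig0
  have hσmpos : 0 < σm := by
    rcases hσm0.lt_or_eq with h | h
    · exact h
    · exfalso
      have hk0 : κ = 0 := by rw [hκcond, ← hσm, ← h, div_zero]
      linarith
  have hκeq : κ = specNorm X / σm := by rw [hκcond, hσm]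
  have hσm_le : σm ≤ specNorm X := by rw [hσm]; exact sigmaPos_le_specNorm X
  have hwpos : 0 < Real.sqrt σm := Real.sqrt_pos.mpr hσmpos
  have hrn₁ : r ≤ n₁ := by simpa using rank_card_le hPX
  have hrn₂ : r ≤ n₂ := by simpa using rank_card_le hQX
  have hrk : r ≤ k := by simpa using rank_card_le hQt1
  -- structural facts
  have hS : flipSign n₁ n₂ * flipSign n₁ n₂ = 1 := flipSign_mul_self
  have hSt : (flipSign n₁ n₂)ᵀ = flipSign n₁ n₂ := flipSign_transpose
  have hSL : flipSign n₁ n₂ * LX = Zstack PX (-QX) := by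
    rw [hLX]; exact flip_mul_stack PX QX
  have hLL : LXᵀ * LX = 1 := by
    rw [hLX, stackT_mul_stack, hPX, hQX]
    exact half_smul_add_self 1
  have hLSL : LXᵀ * (flipSign n₁ n₂ * LX) = 0 := by
    rw [hSL, hLX, stackT_mul_stack, Matrix.mul_neg, hPX, hQX, add_neg_cancel, smul_zero]
  have hZ'S : Z' t = flipSign n₁ n₂ * Z t := by
    rw [hZ, hZ']
    exact (flip_mul_stack _ _).symm
  have hXsymm : (symMat X)ᵀ = symMat X := symMat_transpose X
  have hXSf : flipSign n₁ n₂ * symMat X * flipSign n₁ n₂ = -(symMat X) := flip_symMat_flip X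
  have hXPi : (1 - LX * LXᵀ - (flipSign n₁ n₂ * LX) * (flipSign n₁ n₂ * LX)ᵀ) * symMat X = 0 := by
    rw [hSL, hLX]
    have h0 : (Zstack PX QX * (Zstack PX QX)ᵀ + Zstack PX (-QX) * (Zstack PX (-QX))ᵀ)
        * symMat X = symMat X := by
      rw [proj_stack PX QX, hXsvd]
      exact proj_symMat PX QX _ hPX hQX
    rw [Matrix.add_mul] at h0
    rw [Matrix.sub_mul, Matrix.sub_mul, Matrix.one_mul, sub_sub, h0, sub_self]
  have hC1 : LX * LXᵀ + LXp * LXpᵀ = 1 :=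
    complete_of_orth LX LXp hLL hLXp1 hLXp2
      (by simp only [Fintype.card_fin, Fintype.card_sum]; omega)
  have hC2 : Qt * Qtᵀ + Qtp * Qtpᵀ = 1 :=
    complete_of_orth Qt Qtp hQt1 hQtp1 hQtp2
      (by simp only [Fintype.card_fin, Fintype.card_sum]; omega)
  obtain ⟨hPZ1, -, hPZ3⟩ := hPZ
  -- convert spectral norms
  rw [specNorm_eq_l2] at h2 h3 h6
  -- εZ bound
  have hεZ : ‖LXpᵀ * PZ‖ * ‖Z t‖ ≤ Real.sqrt σm / 50 := by
    have hstep : ‖LXpᵀ * PZ‖ * ‖Z t‖ ≤ (1/100/κ) * (2 * Real.sqrt (specNorm X)) := by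
      apply mul_le_mul h2 h3 (norm_nonneg _) (by positivity)
    refine le_trans hstep ?_
    have hsqa_pos : 0 < Real.sqrt (specNorm X) := Real.sqrt_pos.mpr hXpos
    have key : σm * Real.sqrt (specNorm X) ≤ specNorm X * Real.sqrt σm := by
      nlinarith [mul_le_mul_of_nonneg_left (Real.sqrt_le_sqrt hσm_le)
          (mul_nonneg (Real.sqrt_nonneg σm) (Real.sqrt_nonneg (specNorm X))),
        Real.sq_sqrt hσmpos.le, Real.sq_sqrt hXpos.le,
        Real.sqrt_nonneg σm, Real.sqrt_nonneg (specNorm X)]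
    have e2 : (1/100/κ) * (2 * Real.sqrt (specNorm X))
        = σm * Real.sqrt (specNorm X) / (50 * specNorm X) := by
      rw [hκeq]
      field_simp
      ring
    rw [e2, div_le_div_iff₀ (by positivity) (by norm_num)]
    nlinarith [key]
  -- s bound
  have hs' : ‖Z t * Qtp‖ ≤ Real.sqrt σm / 100 := by
    refine le_trans h6 ?_
    rw [div_eq_mul_inv]
    ring_nf
    exact le_rfl
  -- τ bound
  have hτ' : ∀ y : Fin r → ℝ, Real.sqrt σm / 3 * euclNorm y
      ≤ euclNorm ((Z t * Qt) *ᵥ y) := by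
    have hτpos : 0 < Real.sqrt (σm / 8) := Real.sqrt_pos.mpr (by positivity)
    rcases sigmaMin_lower (Z t * Qt) hτpos h5 with hgood | hbad
    · intro y
      have h9 : Real.sqrt (σm / 9) = Real.sqrt σm / 3 := by
        rw [show (σm/9:ℝ) = (Real.sqrt σm / 3)^2 by
          rw [div_pow, Real.sq_sqrt hσmpos.le]; norm_num]
        exact Real.sqrt_sq (by positivity)
      have h38 : Real.sqrt σm / 3 ≤ Real.sqrt (σm / 8) := by
        rw [← h9]
        exact Real.sqrt_le_sqrt (by linarith)
      calc Real.sqrt σm / 3 * euclNorm y ≤ Real.sqrt (σm / 8) * euclNorm y :=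
          mul_le_mul_of_nonneg_right h38 (euclNorm_nonneg y)
        _ ≤ euclNorm ((Z t * Qt) *ᵥ y) := hgood y
    · exfalso
      simp only [Fintype.card_fin, Fintype.card_sum] at hbad
      have hn₁ : n₁ = 0 := by omega
      subst hn₁
      have hX0 : X = 0 := by
        ext i j
        exact Fin.elim0 i
      rw [hX0, specNorm_zero] at hXpos
      exact lt_irrefl 0 hXpos
  -- finish
  simp only [specNorm_eq_l2]
  rw [hZ'S]
  exact master LX LXp (Z t) PZ (flipSign n₁ n₂) (symMat X) Qt Qtp (Real.sqrt σm)
    hS hSt hLL hLSL hLXp1 hLXp2 hC1 hQt1 hQtp1 hC2 hPZ1 hPZ3 hXSf hXsymm hXPi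
    hwpos hεZ hs' hτ'

end Main

end AsymMatrixSensing
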